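/- Let k be a field, let G be a finite abelian group, and let M be a finitely generated module over the group algebra k[G]. Write M^* := Hom_{k[G]}(M, k[G]), let M^G := {x ∈ M : g·x = x for all g ∈ G} denote the G-invariants, and let (M^*)_G := M^* / (span of the elements g·f − f for g ∈ G, f ∈ M^*) denote the G-coinvariants of M^*. Then dim_k (M^*)_G = dim_k M^G. -/

import Mathlib

/-- The submodule of `G`-invariants of a module over the group algebra `k[G]`. -/
def groupInvariants (R : Type*) [CommSemiring R] (G : Type*) [CommMonoid G]
    (M : Type*) [AddCommMonoid M] [Module (MonoidAlgebra R G) M]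
    [Module R M] [IsScalarTower R (MonoidAlgebra R G) M] :
    Submodule R M where
  carrier := {x | ∀ g : G, MonoidAlgebra.of R G g • x = x}
  add_mem' hx hy := fun g => by rw [smul_add, hx g, hy g]
  zero_mem' := fun g => smul_zero _
  smul_mem' c x hx := fun g => by rw [smul_comm, hx g]

section Aux

variable {k : Type*} [Field k] {G : Type*} [CommGroup G] [Fintype G]
  {M : Type*} [AddCommGroup M] [Module (MonoidAlgebra k G) M]
  [Module k M] [IsScalarTower k (MonoidAlgebra k G) M]

local notation "A" => MonoidAlgebra k G

set_option linter.unusedSectionVars false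

/-- `g • ·` as a `k`-linear endomorphism of `M`. -/
noncomputable def rho (g : G) : M →ₗ[k] M where
  toFun x := MonoidAlgebra.of k G g • x
  map_add' x y := smul_add _ x y
  map_smul' c x := smul_comm _ c x

lemma rho_apply (g : G) (x : M) : (rho g : M →ₗ[k] M) x = MonoidAlgebra.of k G g • x := rfl

/-- The Frobenius transport: `f ↦ (coefficient of 1) ∘ f`. -/
noncomputable def Tmap : Module.Dual A M →ₗ[k] Module.Dual k M where
  toFun f := (Finsupp.lapply (1 : G)).comp ((MonoidAlgebra.coeffLinearEquiv k).toLinearMap.comp (f.restrictScalars k))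
  map_add' f g := by ext x; rfl
  map_smul' c f := by ext x; rfl

lemma Tmap_apply (f : Module.Dual A M) (x : M) : Tmap f x = (f x).coeff (1 : G) := rfl

lemma Tmap_injective : Function.Injective (Tmap (k := k) (G := G) (M := M)) := by
  intro f f' h
  rw [← sub_eq_zero] at h ⊢
  rw [← map_sub] at h
  set d := f - f' with hd
  refine LinearMap.ext fun x => ?_
  show d x = (0 : A)
  refine MonoidAlgebra.ext (Finsupp.ext fun g => ?_)
  have h1 : Tmap d ((MonoidAlgebra.of k G g⁻¹) • x) = 0 := by rw [h]; rfl
  rw [Tmap_apply, map_smul, smul_eq_mul] at h1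
  simpa [MonoidAlgebra.of_apply, MonoidAlgebra.coeff_single_mul_apply] using h1

lemma Tmap_surjective : Function.Surjective (Tmap (k := k) (G := G) (M := M)) := by
  intro φ
  let f0 : M →ₗ[k] A :=
    ∑ g : G, (MonoidAlgebra.lsingle (R := k) g).comp (φ.comp (rho g⁻¹))
  have hf0 : ∀ x : M, f0 x
      = ∑ g : G, MonoidAlgebra.single g (φ (MonoidAlgebra.of k G g⁻¹ • x)) := by
    intro x
    show (∑ g : G, (MonoidAlgebra.lsingle (R := k) g).comp (φ.comp (rho g⁻¹))) x = _
    rw [LinearMap.sum_apply]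
    refine Finset.sum_congr rfl fun g _ => ?_
    rfl
  have hof : ∀ (g : G) (x : M), f0 (MonoidAlgebra.of k G g • x)
      = MonoidAlgebra.of k G g * f0 x := by
    intro g x
    rw [hf0, hf0, Finset.mul_sum]
    conv_lhs => rw [← Equiv.sum_comp (Equiv.mulLeft g)
      (fun h => MonoidAlgebra.single h (φ (MonoidAlgebra.of k G h⁻¹ • (MonoidAlgebra.of k G g • x))))]
    refine Finset.sum_congr rfl fun g' _ => ?_
    simp only [Equiv.coe_mulLeft, smul_smul, MonoidAlgebra.of_apply,
      MonoidAlgebra.single_mul_single, one_mul]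
    have h2 : (g * g')⁻¹ * g = g'⁻¹ := by group
    rw [h2]
  have hA : ∀ (a : A) (x : M), f0 (a • x) = a * f0 x := by
    intro a x
    induction a using MonoidAlgebra.induction_linear with
    | zero => rw [zero_smul, map_zero, zero_mul]
    | add a b ha hb => rw [add_smul, map_add, ha, hb, add_mul]
    | single g c =>
        have h1 : (MonoidAlgebra.single g c : A) = c • MonoidAlgebra.of k G g := by
          rw [MonoidAlgebra.of_apply, MonoidAlgebra.smul_single', mul_one]
        rw [h1, smul_assoc, map_smul, hof, smul_mul_assoc]
  let f : Module.Dual A M :=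
    { toFun := f0
      map_add' := f0.map_add
      map_smul' := fun a x => by simpa [smul_eq_mul] using hA a x }
  refine ⟨f, ?_⟩
  ext x
  show (f0 x).coeff 1 = φ x
  rw [hf0, MonoidAlgebra.coeff_sum, Finsupp.finset_sum_apply, Finset.sum_eq_single (1 : G)]
  · simp [MonoidAlgebra.of_apply, ← MonoidAlgebra.one_def]
  · intro g _ hg
    classical
    simp [MonoidAlgebra.single_apply, hg]
  · simp

lemma Tmap_intertwine (g : G) (f : Module.Dual A M) :
    Tmap (MonoidAlgebra.of k G g • f - f) = (Tmap f).comp (rho g) - Tmap f := by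
  ext x
  simp only [map_sub, LinearMap.sub_apply, LinearMap.comp_apply, Tmap_apply, rho_apply,
    LinearMap.smul_apply, map_smul]

end Aux


/-- For a finitely generated module `M` over `k[G]` (`G` finite abelian, `k` a field),
the `k`-dimension of the `G`-coinvariants of `M* = Hom_{k[G]}(M, k[G])` equals the
`k`-dimension of the `G`-invariants of `M`. -/
theorem finrank_dual_coinvariants_eq_finrank_invariants
    (k : Type*) [Field k] (G : Type*) [CommGroup G] [Fintype G]
    (M : Type*) [AddCommGroup M] [Module (MonoidAlgebra k G) M]
    [Module k M] [IsScalarTower k (MonoidAlgebra k G) M]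
    [Module.Finite (MonoidAlgebra k G) M] :
    Module.finrank k
        ((Module.Dual (MonoidAlgebra k G) M) ⧸
          Submodule.span k {y : Module.Dual (MonoidAlgebra k G) M |
            ∃ (g : G) (f : Module.Dual (MonoidAlgebra k G) M),
              y = MonoidAlgebra.of k G g • f - f}) =
      Module.finrank k (groupInvariants k G M) := by
  classical
  haveI : Module.Finite k (MonoidAlgebra k G) :=
    Module.Finite.equiv (MonoidAlgebra.coeffLinearEquiv (S := k) (M := G) k).symm
  haveI : Module.Finite k M := Module.Finite.trans (MonoidAlgebra k G) M
  set S₁ : Set (Module.Dual (MonoidAlgebra k G) M) :=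
    {y | ∃ (g : G) (f : Module.Dual (MonoidAlgebra k G) M),
      y = MonoidAlgebra.of k G g • f - f} with hS₁
  set S₂ : Set (Module.Dual k M) :=
    {y | ∃ (g : G) (φ : Module.Dual k M), y = φ.comp (rho g) - φ} with hS₂
  set W : Submodule k M := groupInvariants k G M with hW
  -- the Frobenius equivalence
  let e : Module.Dual (MonoidAlgebra k G) M ≃ₗ[k] Module.Dual k M :=
    LinearEquiv.ofBijective Tmap ⟨Tmap_injective, Tmap_surjective⟩
  have hcoe : ∀ y, e y = Tmap y := fun _ => rfl
  have himg : e '' S₁ = S₂ := by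
    ext ψ
    constructor
    · rintro ⟨y, ⟨g, f, rfl⟩, rfl⟩
      exact ⟨g, Tmap f, by rw [hcoe]; exact Tmap_intertwine g f⟩
    · rintro ⟨g, φ, rfl⟩
      obtain ⟨f, hf⟩ := Tmap_surjective (k := k) (G := G) (M := M) φ
      exact ⟨MonoidAlgebra.of k G g • f - f, ⟨g, f, rfl⟩,
        by rw [hcoe, Tmap_intertwine, hf]⟩
  have hmap : Submodule.map (e : Module.Dual (MonoidAlgebra k G) M →ₗ[k] Module.Dual k M)
      (Submodule.span k S₁) = Submodule.span k S₂ := by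
    rw [Submodule.map_span]
    congr 1
  have e2 := Submodule.Quotient.equiv (Submodule.span k S₁) (Submodule.span k S₂) e hmap
  rw [e2.finrank_eq]
  -- identify the span with the dual annihilator of the invariants
  have hco : (Submodule.span k S₂).dualCoannihilator = W := by
    ext x
    rw [Submodule.mem_dualCoannihilator]
    constructor
    · intro h g
      rw [← sub_eq_zero]
      refine (Module.forall_dual_apply_eq_zero_iff k _).mp fun φ => ?_
      have := h (φ.comp (rho g) - φ) (Submodule.subset_span ⟨g, φ, rfl⟩)
      simpa [rho_apply, sub_eq_zero] using this
    · intro hx φ hφ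
      refine Submodule.span_induction ?_ ?_ ?_ ?_ hφ
      · rintro ψ ⟨g, φ', rfl⟩
        simp only [LinearMap.sub_apply, LinearMap.comp_apply, rho_apply, hx g, sub_self]
      · simp
      · intro a b _ _ ha hb; simp [ha, hb]
      · intro c a _ ha; simp [ha]
  have hann : Submodule.span k S₂ = W.dualAnnihilator := by
    rw [← Subspace.dualCoannihilator_dualAnnihilator_eq (W := Submodule.span k S₂), hco]
  rw [hann, (Subspace.quotAnnihilatorEquiv W).finrank_eq, Subspace.dual_finrank_eq]
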